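/- For every integer m ≥ 1, the map T defined by Tx = H^(m)x is a linear bijection from the Hilbert difference sequence space h_c(Δ^(m)) onto the space c of convergent real sequences, and it is norm-preserving when h_c(Δ^(m)) carries the norm ‖x‖ = sup_n |(H^(m)x)_n| and c carries the sup norm. In particular h_c(Δ^(m)) is linearly isometrically isomorphic to c. -/
import Mathlib


open Filter Finset Topology

/- Real sequences are modelled as functions `ℕ → ℝ`, where the Lean index `n : ℕ`
corresponds to the paper's index `n + 1` (the paper indexes sequences by `k ≥ 1`).
Thus the paper's entry `h_{nk} = ∑_{i=k}^{n} (-1)^{i-k} C(m, i-k) / (n+i-1)`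
(for `1 ≤ k ≤ n`) becomes, with 0-based indices,
`hMat m n k = ∑_{i ∈ Icc k n} (-1)^{i-k} C(m, i-k) / (n+i+1)`. -/

/-- The entries of the triangle matrix `H^(m) = H Δ^(m)` (0-based indexing). -/
noncomputable def hMat (m n k : ℕ) : ℝ :=
  ∑ i ∈ Finset.Icc k n, (-1 : ℝ) ^ (i - k) * (Nat.choose m (i - k) : ℝ) / ((n + i + 1 : ℕ) : ℝ)

/-- The `H^(m)`-transform of a sequence: `(H^(m) x)_n = ∑_{k=1}^{n} h_{nk} x_k`. -/
noncomputable def hTrans (m : ℕ) (x : ℕ → ℝ) (n : ℕ) : ℝ :=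
  ∑ k ∈ Finset.range (n + 1), hMat m n k * x k

/-- `h_0(Δ^(m))`: sequences whose `H^(m)`-transform tends to `0`. -/
def hZero (m : ℕ) : Set (ℕ → ℝ) := {x | Tendsto (hTrans m x) atTop (𝓝 0)}

/-- `h_c(Δ^(m))`: sequences whose `H^(m)`-transform converges. -/
def hConv (m : ℕ) : Set (ℕ → ℝ) := {x | ∃ L : ℝ, Tendsto (hTrans m x) atTop (𝓝 L)}

/-- `h_∞(Δ^(m))`: sequences whose `H^(m)`-transform is bounded. -/
def hBdd (m : ℕ) : Set (ℕ → ℝ) := {x | ∃ M : ℝ, ∀ n, |hTrans m x n| ≤ M}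

/-- The space `c₀` of null real sequences. -/
def c0Seq : Set (ℕ → ℝ) := {y | Tendsto y atTop (𝓝 0)}

/-- The space `c` of convergent real sequences. -/
def cSeq : Set (ℕ → ℝ) := {y | ∃ L : ℝ, Tendsto y atTop (𝓝 L)}

/-- The space `ℓ∞` of bounded real sequences. -/
def linfSeq : Set (ℕ → ℝ) := {y | ∃ M : ℝ, ∀ n, |y n| ≤ M}

/-- The sup norm `‖y‖ = sup_n |y_n|` of a sequence. -/
noncomputable def supNorm (y : ℕ → ℝ) : ℝ := ⨆ n, |y n|

/-- The norm `‖x‖ = sup_n |(H^(m) x)_n|` on the Hilbert difference sequence spaces. -/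
noncomputable def hNorm (m : ℕ) (x : ℕ → ℝ) : ℝ := supNorm (hTrans m x)


lemma hMat_diag (m n : ℕ) : hMat m n n = 1 / ((n + n + 1 : ℕ) : ℝ) := by
  simp [hMat]

lemma hMat_diag_ne (m n : ℕ) : hMat m n n ≠ 0 := by
  rw [hMat_diag]
  positivity

noncomputable def invSeq (m : ℕ) (y : ℕ → ℝ) : ℕ → ℝ
  | n => (y n - ∑ k ∈ (Finset.range n).attach, hMat m n k * invSeq m y k) / hMat m n n
decreasing_by exact Finset.mem_range.mp k.2

lemma hTrans_invSeq (m : ℕ) (y : ℕ → ℝ) : hTrans m (invSeq m y) = y := by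
  funext n
  rw [hTrans, Finset.sum_range_succ, invSeq,
    Finset.sum_attach (Finset.range n) (fun k => hMat m n k * invSeq m y k),
    mul_comm, div_mul_cancel₀ _ (hMat_diag_ne m n)]
  ring

lemma hTrans_inj (m : ℕ) {x x' : ℕ → ℝ} (h : hTrans m x = hTrans m x') : x = x' := by
  funext n
  induction n using Nat.strong_induction_on with
  | _ n ih =>
    have hn := congrFun h n
    rw [hTrans, hTrans, Finset.sum_range_succ, Finset.sum_range_succ] at hn
    have hs : ∑ k ∈ Finset.range n, hMat m n k * x k
        = ∑ k ∈ Finset.range n, hMat m n k * x' k := by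
      apply Finset.sum_congr rfl
      intro k hk
      rw [ih k (Finset.mem_range.mp hk)]
    rw [hs] at hn
    have := add_left_cancel hn
    exact mul_left_cancel₀ (hMat_diag_ne m n) this

/-- The map `T x = H^(m) x` is a linear, norm-preserving bijection from `hConv m` onto `cSeq`. -/
theorem hilbert_diff_hc_iso_c (m : ℕ) (hm : 1 ≤ m) :
    (∀ (a b : ℝ) (x y : ℕ → ℝ),
      hTrans m (fun k => a * x k + b * y k) = fun n => a * hTrans m x n + b * hTrans m y n) ∧
    Set.BijOn (hTrans m) (hConv m) cSeq ∧
    (∀ x ∈ hConv m, hNorm m x = supNorm (hTrans m x)) := by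
  refine ⟨?_, ⟨?_, ?_, ?_⟩, fun x _ => rfl⟩
  · intro a b x y
    funext n
    simp only [hTrans, mul_add, Finset.mul_sum]
    rw [← Finset.sum_add_distrib]
    apply Finset.sum_congr rfl
    intro k _
    ring
  · intro x hx
    exact hx
  · intro x hx x' hx' h
    exact hTrans_inj m h
  · intro y hy
    exact ⟨invSeq m y, by rw [hConv, Set.mem_setOf_eq, hTrans_invSeq]; exact hy,
      hTrans_invSeq m y⟩
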